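/- Let P > 3 be an integer and r ∈ (0,1), and define f(W) = 2WP + 2WP(P−1)·r^W/(1 − r^W) for real W > 0, where r^W = exp(W·log r). Let x* ∈ (0,1) be the unique point such that g(x) = (1 − x)² + (P − 1)·x·(1 − x + log x) satisfies g(x) > 0 on (0, x*) and g(x) < 0 on (x*, 1), and set W* = log(x*)/log(r). Then f attains its global minimum on (0, ∞) at W*, i.e., f(W) ≥ f(W*) for all W > 0, with equality only at W = W*. -/

import Mathlib

private lemma deo_hderiv (p : ℝ) (y : ℝ) (hy0 : 0 < y) (hy1 : y < 1) :
    HasDerivAt (fun z => Real.log z * (1 + (p-1)*z/(1-z)))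
      (((1-y)^2 + (p-1)*y*(1-y+Real.log y))/(y*(1-y)^2)) y := by
  have hyne : y ≠ 0 := ne_of_gt hy0
  have h1ne : (1:ℝ) - y ≠ 0 := sub_ne_zero.2 (ne_of_gt hy1)
  have h1 : HasDerivAt Real.log y⁻¹ y := Real.hasDerivAt_log hyne
  have hnum : HasDerivAt (fun z : ℝ => (p-1)*z) (p-1) y := by
    simpa using (hasDerivAt_id y).const_mul (p-1)
  have hden : HasDerivAt (fun z : ℝ => 1 - z) (-1) y := by
    exact (hasDerivAt_id y).const_sub 1
  have hdiv := hnum.div hden h1ne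
  have h2 : HasDerivAt (fun z => 1 + (p-1)*z/(1-z))
      (((p-1)*(1-y) - (p-1)*y*(-1))/(1-y)^2) y := by
    exact hdiv.const_add 1
  have h3 : HasDerivAt (fun z => Real.log z * (1 + (p-1)*z/(1-z)))
      (y⁻¹ * (1 + (p-1)*y/(1-y)) + Real.log y * (((p-1)*(1-y) - (p-1)*y*(-1))/(1-y)^2)) y :=
    h1.mul h2
  convert h3 using 1
  field_simp
  ring

private lemma deo_aux_max (p : ℝ) (xstar : ℝ) (hxs : xstar ∈ Set.Ioo (0:ℝ) 1)
    (hpos : ∀ x ∈ Set.Ioo (0:ℝ) xstar, (1-x)^2 + (p-1)*x*(1-x+Real.log x) > 0)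
    (hneg : ∀ x ∈ Set.Ioo xstar 1, (1-x)^2 + (p-1)*x*(1-x+Real.log x) < 0)
    (x : ℝ) (hx : x ∈ Set.Ioo (0:ℝ) 1) (hne : x ≠ xstar) :
    Real.log x * (1 + (p-1)*x/(1-x)) < Real.log xstar * (1 + (p-1)*xstar/(1-xstar)) := by
  set h : ℝ → ℝ := fun z => Real.log z * (1 + (p-1)*z/(1-z)) with hh
  have hder : ∀ y ∈ Set.Ioo (0:ℝ) 1, HasDerivAt h
      (((1-y)^2 + (p-1)*y*(1-y+Real.log y))/(y*(1-y)^2)) y := fun y hy =>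
    deo_hderiv p y hy.1 hy.2
  rcases lt_or_gt_of_ne hne with hlt | hgt
  · -- x < xstar : h strictly increasing on [x, xstar]
    have hsub : Set.Icc x xstar ⊆ Set.Ioo (0:ℝ) 1 := fun y hy =>
      ⟨lt_of_lt_of_le hx.1 hy.1, lt_of_le_of_lt hy.2 hxs.2⟩
    have hmono : StrictMonoOn h (Set.Icc x xstar) := by
      apply strictMonoOn_of_deriv_pos (convex_Icc _ _)
      · exact fun y hy => ((hder y (hsub hy)).differentiableAt.continuousAt).continuousWithinAt
      · intro y hy
        rw [interior_Icc] at hy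
        have hy01 := hsub (Set.Ioo_subset_Icc_self hy)
        rw [(hder y hy01).deriv]
        apply div_pos
        · exact hpos y ⟨hy01.1, hy.2⟩
        · exact mul_pos hy01.1 (pow_pos (sub_pos.2 hy01.2) 2)
    exact hmono (Set.left_mem_Icc.2 hlt.le) (Set.right_mem_Icc.2 hlt.le) hlt
  · -- xstar < x : h strictly decreasing on [xstar, x]
    have hsub : Set.Icc xstar x ⊆ Set.Ioo (0:ℝ) 1 := fun y hy =>
      ⟨lt_of_lt_of_le hxs.1 hy.1, lt_of_le_of_lt hy.2 hx.2⟩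
    have hmono : StrictAntiOn h (Set.Icc xstar x) := by
      apply strictAntiOn_of_deriv_neg (convex_Icc _ _)
      · exact fun y hy => ((hder y (hsub hy)).differentiableAt.continuousAt).continuousWithinAt
      · intro y hy
        rw [interior_Icc] at hy
        have hy01 := hsub (Set.Ioo_subset_Icc_self hy)
        rw [(hder y hy01).deriv]
        apply div_neg_of_neg_of_pos
        · exact hneg y ⟨hy.1, hy01.2⟩
        · exact mul_pos hy01.1 (pow_pos (sub_pos.2 hy01.2) 2)
    exact hmono (Set.left_mem_Icc.2 hgt.le) (Set.right_mem_Icc.2 hgt.le) hgt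

theorem deo_optimal_window (P : ℕ) (hP : 3 < P) (r : ℝ) (hr : r ∈ Set.Ioo (0 : ℝ) 1)
    (xstar : ℝ) (hxstar : xstar ∈ Set.Ioo (0 : ℝ) 1)
    (hpos : ∀ x ∈ Set.Ioo (0 : ℝ) xstar,
      (1 - x) ^ 2 + ((P : ℝ) - 1) * x * (1 - x + Real.log x) > 0)
    (hneg : ∀ x ∈ Set.Ioo xstar (1 : ℝ),
      (1 - x) ^ 2 + ((P : ℝ) - 1) * x * (1 - x + Real.log x) < 0) :
    let f : ℝ → ℝ := fun W => 2 * W * P +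
      2 * W * P * ((P : ℝ) - 1) * Real.exp (W * Real.log r) /
        (1 - Real.exp (W * Real.log r))
    let Wstar : ℝ := Real.log xstar / Real.log r
    ∀ W : ℝ, 0 < W → f Wstar ≤ f W ∧ (f W = f Wstar → W = Wstar) := by
  intro f Wstar W hW
  set p : ℝ := (P : ℝ) with hp
  have hp3 : (3:ℝ) < p := by simp only [hp]; exact_mod_cast hP
  have hL : Real.log r < 0 := Real.log_neg hr.1 hr.2
  have hLne : Real.log r ≠ 0 := ne_of_lt hL
  have hlogxs : Real.log xstar < 0 := Real.log_neg hxstar.1 hxstar.2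
  have hWs : 0 < Wstar := div_pos_iff.2 (Or.inr ⟨hlogxs, hL⟩)
  -- key : f V = (2p / log r) * h (exp (V log r)) for V > 0
  have key : ∀ V : ℝ, 0 < V → f V =
      (2 * p / Real.log r) *
        (Real.log (Real.exp (V * Real.log r)) *
          (1 + (p-1) * Real.exp (V * Real.log r) / (1 - Real.exp (V * Real.log r)))) := by
    intro V hV
    have he1 : Real.exp (V * Real.log r) < 1 := by
      rw [Real.exp_lt_one_iff]
      exact mul_neg_of_pos_of_neg hV hL
    have hene : (1:ℝ) - Real.exp (V * Real.log r) ≠ 0 := sub_ne_zero.2 (ne_of_gt he1)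
    simp only [f, Real.log_exp]
    field_simp
    ring
  have hxW : Real.exp (W * Real.log r) ∈ Set.Ioo (0:ℝ) 1 := by
    refine ⟨Real.exp_pos _, ?_⟩
    rw [Real.exp_lt_one_iff]
    exact mul_neg_of_pos_of_neg hW hL
  have hxWs : Real.exp (Wstar * Real.log r) = xstar := by
    rw [div_mul_cancel₀ _ hLne, Real.exp_log hxstar.1]
  have hc : 2 * p / Real.log r < 0 :=
    div_neg_of_pos_of_neg (by linarith) hL
  by_cases hWe : W = Wstar
  · subst hWe; exact ⟨le_refl _, fun _ => rfl⟩
  · have hxne : Real.exp (W * Real.log r) ≠ xstar := by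
      intro hcon
      apply hWe
      have : W * Real.log r = Wstar * Real.log r := by
        rw [← Real.log_exp (W * Real.log r), hcon, ← hxWs, Real.log_exp]
      exact mul_right_cancel₀ hLne this
    have hlt := deo_aux_max p xstar hxstar hpos hneg _ hxW hxne
    have hstrict : f Wstar < f W := by
      rw [key W hW, key Wstar hWs, hxWs, Real.log_exp]
      rw [← hxWs, Real.log_exp] at hlt
      rw [hxWs] at hlt
      exact (mul_lt_mul_left_of_neg hc).2 hlt
    exact ⟨hstrict.le, fun heq => absurd heq (ne_of_gt hstrict)⟩
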